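/- Let p be an odd prime, let λ be a symmetric partition with empty p-core, let X be a β-set for λ with |X| ≡ 0 (mod p), and let θ = θ(X). Suppose y = γ + (k−1)p ∉ X and x = γ + kp ∈ X for some 0 ≤ γ ≤ p − 1 and k ≥ 1, so (y,x) is a p-hook of X and (k−1, k) is a hook of the induced β-set X_γ, corresponding to a node (i,j) of the Young diagram of λ_γ (with i = #{z ∈ X_γ : z ≥ k} and j = #{z ∈ ℕ : z ∉ X_γ, z ≤ k−1}). Then y < θ < x (the p-hook straddles θ) if and only if i = j (the node is a diagonal node of λ_γ). -/
import Mathlib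


/-- A partition of a natural number, given as a weakly decreasing,
eventually-zero sequence of parts (0-indexed: `parts i` is the (i+1)-st part). -/
structure NPartition where
  parts : ℕ → ℕ
  antitone : ∀ ⦃i j : ℕ⦄, i ≤ j → parts j ≤ parts i
  finite_support : ∃ N : ℕ, ∀ n : ℕ, N ≤ n → parts n = 0

/-- The conjugate (dual) partition: `conj j` is the (j+1)-st part of `λ*`,
i.e. the number of indices `i` with `parts i > j`. -/
noncomputable def NPartition.conj (μ : NPartition) (j : ℕ) : ℕ :=
  Nat.card {i : ℕ // j < μ.parts i}

/-- A partition is symmetric if it equals its conjugate. -/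
def IsSymmetric (μ : NPartition) : Prop := ∀ j : ℕ, μ.conj j = μ.parts j

/-- `X` is a β-set for `μ`: if `X = {x_1 < … < x_k}` then the parts of `μ`
are `λ_i = x_{k+1−i} − (k − i)` (discarding zero parts); equivalently the
elements of `X` are exactly `parts i + (card X − 1 − i)` for `i < card X`. -/
def IsBetaSet (X : Finset ℕ) (μ : NPartition) : Prop :=
  ∀ n : ℕ, n ∈ X ↔ ∃ i : ℕ, i < X.card ∧ n + i + 1 = μ.parts i + X.card

/-- A hook of a β-set `X`: a pair `(y, x)` with `y ∉ X`, `x ∈ X`, `y < x`. -/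
def IsBetaHook (X : Finset ℕ) (y x : ℕ) : Prop := y ∉ X ∧ x ∈ X ∧ y < x

/-- `θ(X) = t + 1/2`: the number of beads of `X` strictly to the right of `t`
equals the number of spaces (nonnegative integers not in `X`) at positions `≤ t`. -/
def IsTheta (X : Finset ℕ) (t : ℤ) : Prop :=
  -1 ≤ t ∧ (X.filter (fun x : ℕ => t < (x : ℤ))).card =
    ((Finset.range (t + 1).toNat).filter (fun y => y ∉ X)).card

/-- Removing one hook `(y, x)` from the β-set `X` yields `X'`. -/
def RemoveHook (X X' : Finset ℕ) : Prop :=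
  ∃ y x : ℕ, y ∉ X ∧ x ∈ X ∧ y < x ∧ X' = insert y (X.erase x)

/-- Removing one hook of length `p` from the β-set `X` yields `X'`. -/
def RemovePHook (p : ℕ) (X X' : Finset ℕ) : Prop :=
  ∃ y x : ℕ, y ∉ X ∧ x ∈ X ∧ y + p = x ∧ X' = insert y (X.erase x)

/-- The partition represented by `X` has empty `p`-core: `X` can be reduced by
successive removals of `p`-hooks to the β-set `{0, 1, …, card X − 1}` of `∅`. -/
def HasEmptyPCore (p : ℕ) (X : Finset ℕ) : Prop :=
  Relation.ReflTransGen (RemovePHook p) X (Finset.range X.card)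

/-- The induced β-set on runner `γ`: `X_γ = {j : γ + j·p ∈ X}`. -/
def runner (p γ : ℕ) (X : Finset ℕ) : Finset ℕ :=
  (X.filter (fun x => x % p = γ)).image (fun x => x / p)

/-- The set of arm lengths of the diagonal hooks `h_{ii}` of `μ`. -/
def diagArms (μ : NPartition) : Set ℕ :=
  {a | ∃ d : ℕ, d < μ.parts d ∧ a + d + 1 = μ.parts d}

/-- The set of leg lengths of the diagonal hooks `h_{ii}` of `μ`. -/
def diagLegs (μ : NPartition) : Set ℕ :=
  {l | ∃ d : ℕ, d < μ.parts d ∧ l + d + 1 = μ.conj d}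

/-- `δ(μ)`: the set of hook lengths of the diagonal hooks of `μ`. -/
def diagHookLengths (μ : NPartition) : Set ℕ :=
  {e | ∃ d : ℕ, d < μ.parts d ∧ e + 2 * d + 1 = μ.parts d + μ.conj d}

/-- `(x', x)` is a diagonal hook of the β-set `X`: a hook which corresponds to a
hook `h_{ii}` on the diagonal of the Young diagram under the standard bijection. -/
def IsDiagHook (X : Finset ℕ) (x' x : ℕ) : Prop :=
  IsBetaHook X x' x ∧
  (X.filter (fun z => x ≤ z)).card =
    ((Finset.range (x' + 1)).filter (fun z => z ∉ X)).card

/-- `μ` is concentrated at `{γ, γ*}` (`γ* = p − 1 − γ`): every diagonal hook of `μ`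
has arm length congruent to `γ` or `γ*` modulo `p`. -/
def ConcentratedAt (p γ : ℕ) (μ : NPartition) : Prop :=
  ∀ a ∈ diagArms μ, a % p = γ ∨ a % p = p - 1 - γ

/-- `μ` is a `p`-core: no hook of its Young diagram has length `p`
(the hook at node `(i,j)`, 0-indexed, has length `parts i + conj j − i − j − 1`). -/
def IsPCore (p : ℕ) (μ : NPartition) : Prop :=
  ∀ i j : ℕ, j < μ.parts i → μ.parts i + μ.conj j ≠ p + i + j + 1

/-- `μ` is `γ`-packed: the set of arm lengths of diagonal hooks of `μ` congruent to
`γ` mod `p` is exactly `{γ + i·p : 0 ≤ i ≤ r}` for some `r ≥ 0`. -/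
def GammaPacked (p γ : ℕ) (μ : NPartition) : Prop :=
  ∃ r : ℕ, {a | a ∈ diagArms μ ∧ a % p = γ} = {a : ℕ | ∃ i ≤ r, a = γ + i * p}

/-- The β-set `X` admits no `p`-hook. -/
def NoPHooks (p : ℕ) (X : Finset ℕ) : Prop := ¬ ∃ X' : Finset ℕ, RemovePHook p X X'

/-- `μ0` is the `p`-core of the partition with β-set `X`: it is represented by a
β-set obtained from `X` by repeatedly removing `p`-hooks until none remain. -/
def IsPCoreOf (p : ℕ) (X : Finset ℕ) (μ0 : NPartition) : Prop :=
  ∃ X0 : Finset ℕ, Relation.ReflTransGen (RemovePHook p) X X0 ∧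
    NoPHooks p X0 ∧ IsBetaSet X0 μ0

section Aux

lemma runner_card_eq (p γ : ℕ) (X : Finset ℕ) :
    (runner p γ X).card = (X.filter (fun x => x % p = γ)).card := by
  apply Finset.card_image_of_injOn
  intro a ha b hb hab
  simp only [Finset.mem_coe, Finset.mem_filter] at ha hb
  simp only [] at hab
  have h1 := Nat.div_add_mod a p
  have h2 := Nat.div_add_mod b p
  rw [ha.2] at h1
  rw [hb.2] at h2
  rw [← h1, ← h2, hab]

lemma theta_val {X : Finset ℕ} {t : ℤ} (h : IsTheta X t) : t = (X.card : ℤ) - 1 := by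
  obtain ⟨h1, h2⟩ := h
  set n := (t + 1).toNat with hn
  have hnt : (n : ℤ) = t + 1 := Int.toNat_of_nonneg (by omega)
  have e1 : X.filter (fun x : ℕ => t < (x : ℤ)) = X.filter (fun x => n ≤ x) := by
    ext z
    simp only [Finset.mem_filter, and_congr_right_iff]
    intro _
    omega
  have e2 : X.filter (fun x => ¬ n ≤ x) = (Finset.range n).filter (fun z => ¬ z ∉ X) := by
    ext z
    simp only [Finset.mem_filter, Finset.mem_range, not_le, not_not]
    tauto
  have e3 := Finset.card_filter_add_card_filter_not (s := X) (p := fun x => n ≤ x)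
  have e4 := Finset.card_filter_add_card_filter_not (s := Finset.range n)
    (p := fun z => z ∉ X)
  rw [Finset.card_range] at e4
  rw [e1] at h2
  rw [e2] at e3
  omega

lemma runner_card_step (p γ : ℕ) {X X' : Finset ℕ} (h : RemovePHook p X X') :
    (runner p γ X').card = (runner p γ X).card := by
  obtain ⟨y, x, hy, hx, hyx, rfl⟩ := h
  rw [runner_card_eq, runner_card_eq]
  have hmod : y % p = x % p := by rw [← hyx, Nat.add_mod_right]
  rw [Finset.filter_insert, Finset.filter_erase]
  by_cases hc : y % p = γ
  · rw [if_pos hc]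
    have hxγ : x ∈ X.filter (fun z => z % p = γ) :=
      Finset.mem_filter.2 ⟨hx, by rw [← hmod]; exact hc⟩
    have hpos : 0 < (X.filter (fun z => z % p = γ)).card :=
      Finset.card_pos.2 ⟨x, hxγ⟩
    rw [Finset.card_insert_of_notMem, Finset.card_erase_of_mem hxγ]
    · omega
    · intro hmem
      exact hy (Finset.mem_filter.1 (Finset.mem_of_mem_erase hmem)).1
  · rw [if_neg hc]
    congr 1
    apply Finset.erase_eq_of_notMem
    intro hmem
    exact hc (by rw [hmod]; exact (Finset.mem_filter.1 hmem).2)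

lemma runner_card_rtg (p γ : ℕ) {X Y : Finset ℕ}
    (h : Relation.ReflTransGen (RemovePHook p) X Y) :
    (runner p γ Y).card = (runner p γ X).card := by
  induction h with
  | refl => rfl
  | tail _ hbc ih => rw [runner_card_step p γ hbc]; exact ih

lemma runner_card_core (p γ : ℕ) {X : Finset ℕ} (h : HasEmptyPCore p X) :
    (runner p γ X).card = (runner p γ (Finset.range X.card)).card :=
  (runner_card_rtg p γ h).symm

lemma runner_range_card (p γ N : ℕ) (hγ : γ < p) (hN : N % p = 0) :
    (runner p γ (Finset.range N)).card = N / p := by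
  have hdvd : p ∣ N := Nat.dvd_of_mod_eq_zero hN
  rw [runner_card_eq]
  have key : (Finset.range N).filter (fun x => x % p = γ) =
      (Finset.range (N / p)).image (fun j => γ + j * p) := by
    ext z
    simp only [Finset.mem_filter, Finset.mem_range, Finset.mem_image]
    constructor
    · rintro ⟨hz, hzγ⟩
      refine ⟨z / p, Nat.div_lt_div_of_lt_of_dvd hdvd hz, ?_⟩
      have h1 := Nat.div_add_mod z p
      rw [hzγ] at h1
      linarith [h1]
    · rintro ⟨j, hj, rfl⟩
      constructor
      · calc γ + j * p < p + j * p := by omega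
          _ = (j + 1) * p := by ring
          _ ≤ (N / p) * p := Nat.mul_le_mul_right p hj
          _ = N := Nat.div_mul_cancel hdvd
      · rw [Nat.add_mul_mod_self_right]
        exact Nat.mod_eq_of_lt hγ
  rw [key, Finset.card_image_of_injective _ ?_, Finset.card_range]
  intro a b hab
  have hp0 : 0 < p := by omega
  have h' : a * p = b * p := by exact Nat.add_left_cancel hab
  exact Nat.eq_of_mul_eq_mul_right hp0 h'

end Aux

/-- (here the `p`-hook is `(y, x) = (γ + k·p, γ + (k+1)·p)`,
corresponding to the hook `(k, k+1)` of `X_γ` and the node `(i, j)` of `λ_γ`).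
The `p`-hook straddles `θ` (i.e. `y < θ < x`) iff the node is diagonal (`i = j`). -/
theorem stmt10 (p : ℕ) (hp : p.Prime) (hodd : Odd p)
    (X : Finset ℕ) (μ : NPartition) (t : ℤ)
    (hX : IsBetaSet X μ) (hsym : IsSymmetric μ) (hcore : HasEmptyPCore p X)
    (hcard : X.card % p = 0) (ht : IsTheta X t)
    (γ k : ℕ) (hγ : γ < p)
    (hy : γ + k * p ∉ X) (hx : γ + (k + 1) * p ∈ X)
    (i j : ℕ)
    (hi : i = ((runner p γ X).filter (fun z => k + 1 ≤ z)).card)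
    (hj : j = ((Finset.range (k + 1)).filter (fun z => z ∉ runner p γ X)).card) :
    (((γ + k * p : ℕ) : ℤ) ≤ t ∧ t < ((γ + (k + 1) * p : ℕ) : ℤ)) ↔ i = j := by
  have hp0 : 0 < p := hp.pos
  set N := X.card with hNdef
  have ht' : t = (N : ℤ) - 1 := theta_val ht
  have hdvd : p ∣ N := Nat.dvd_of_mod_eq_zero hcard
  set m := N / p with hm
  have hN : N = m * p := (Nat.div_mul_cancel hdvd).symm
  have hrc : (runner p γ X).card = m := by
    rw [runner_card_core p γ hcore]
    exact runner_range_card p γ N hγ hcard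
  set R := runner p γ X with hR
  have e3 := Finset.card_filter_add_card_filter_not (s := R) (p := fun z => k + 1 ≤ z)
  have e4 := Finset.card_filter_add_card_filter_not (s := Finset.range (k + 1))
    (p := fun z => z ∉ R)
  rw [Finset.card_range] at e4
  rw [hrc] at e3
  have e5 : R.filter (fun z => ¬ k + 1 ≤ z) = (Finset.range (k + 1)).filter (fun z => ¬ z ∉ R) := by
    ext z
    simp only [Finset.mem_filter, Finset.mem_range, not_le, not_not]
    tauto
  rw [e5] at e3
  have hij : (i = j) ↔ m = k + 1 := by
    subst hi hj
    omega
  set A := γ + k * p with hAdef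
  set B := γ + (k + 1) * p with hBdef
  have hA : A < N ↔ k + 1 ≤ m := by
    rw [hAdef, hN]
    constructor
    · intro h
      have h2 : k * p < m * p := by linarith
      exact Nat.lt_of_mul_lt_mul_right h2
    · intro h
      calc γ + k * p < p + k * p := by omega
        _ = (k + 1) * p := by ring
        _ ≤ m * p := Nat.mul_le_mul_right p h
  have hB : N ≤ B ↔ m ≤ k + 1 := by
    rw [hBdef, hN]
    constructor
    · intro h
      have h2 : m * p < (k + 2) * p := by
        have : γ + (k + 1) * p < (k + 2) * p := by
          have : (k + 2) * p = p + (k + 1) * p := by ring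
          omega
        omega
      have := Nat.lt_of_mul_lt_mul_right h2
      omega
    · intro h
      have h2 : m * p ≤ (k + 1) * p := Nat.mul_le_mul_right p h
      omega
  rw [hij]
  constructor
  · rintro ⟨h1, h2⟩
    have hA' : k + 1 ≤ m := hA.mp (by omega)
    have hB' : m ≤ k + 1 := hB.mp (by omega)
    omega
  · intro h
    have h1 : A < N := hA.mpr (by omega)
    have h2 : N ≤ B := hB.mpr (by omega)
    constructor <;> omega
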